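/- arXiv:2112.10921 — 3 statements merged into one kernel-verified Lean document; each statement's English description precedes it below -/
import Mathlib

section
/- Let $T \subset \mathbb{R}^2$ be a finitely generated additive subgroup of rank at least three. If every subgroup $T' \subset T$ of corank one spans $\mathbb{R}^2$ as a real vector space, then $T$ is dense in $\mathbb{R}^2$. -/
open Module Submodule Filter

noncomputable section Helpers

def subEquiv (N : Submodule ℤ (ℝ × ℝ)) : N.toAddSubgroup ≃ₗ[ℤ] N where
  toFun x := ⟨x.1, x.2⟩
  invFun x := ⟨x.1, x.2⟩
  map_add' _ _ := rfl
  map_smul' c x := by apply Subtype.ext; simp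
  left_inv _ := rfl
  right_inv _ := rfl

lemma finrank_toAddSubgroup (N : Submodule ℤ (ℝ × ℝ)) :
    Module.finrank ℤ N.toAddSubgroup = Module.finrank ℤ N :=
  (subEquiv N).finrank_eq

lemma finrank_addSubgroup (S : AddSubgroup (ℝ × ℝ)) :
    Module.finrank ℤ S = Module.finrank ℤ S.toIntSubmodule := by
  conv_lhs => rw [← AddSubgroup.toIntSubmodule_toAddSubgroup S]
  exact finrank_toAddSubgroup _

lemma discrete_rank_le (M : Submodule ℤ (ℝ × ℝ)) [DiscreteTopology M] :
    Module.finrank ℤ M ≤ 2 := by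
  set V : Submodule ℝ (ℝ × ℝ) := span ℝ (M : Set (ℝ × ℝ)) with hV
  let f := (V.subtype).restrictScalars ℤ
  let L₀ : Submodule ℤ V := M.comap f
  have h_img : Submodule.map f L₀ = M :=
    Submodule.map_comap_eq_self (fun x hx => ⟨⟨x, subset_span hx⟩, rfl⟩)
  have hd : DiscreteTopology L₀ := by
    refine DiscreteTopology.preimage_of_continuous_injective (M : Set (ℝ × ℝ)) ?_
      (Submodule.injective_subtype V)
    exact LinearMap.continuous_of_finiteDimensional _
  have hz : IsZLattice ℝ L₀ := ⟨by
    rw [← (Submodule.map_injective_of_injective (Submodule.injective_subtype V)).eq_iff,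
      Submodule.map_span, Submodule.map_top, Submodule.range_subtype]
    have : V.subtype '' L₀ = (M : Set (ℝ × ℝ)) := by
      ext x
      constructor
      · rintro ⟨y, hy, rfl⟩; exact hy
      · intro hx; exact ⟨⟨x, subset_span hx⟩, hx, rfl⟩
    rw [this, hV]⟩
  have h1 : Module.finrank ℤ L₀ = Module.finrank ℝ V := ZLattice.rank ℝ L₀
  have h2 : Module.finrank ℤ M = Module.finrank ℤ L₀ := by
    have e := (Submodule.equivMapOfInjective f (Submodule.injective_subtype V) L₀)
    rw [h_img] at e
    exact e.symm.finrank_eq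
  have h3 : Module.finrank ℝ V ≤ Module.finrank ℝ (ℝ × ℝ) := Submodule.finrank_le V
  have h4 : Module.finrank ℝ (ℝ × ℝ) = 2 := by simp [Module.finrank_prod]
  omega

lemma line_in_closure (T : AddSubgroup (ℝ × ℝ))
    (h : ∀ ε : ℝ, 0 < ε → ∃ t ∈ T, t ≠ 0 ∧ ‖t‖ < ε) :
    ∃ u : ℝ × ℝ, ‖u‖ = 1 ∧ ∀ r : ℝ, r • u ∈ closure (T : Set (ℝ × ℝ)) := by
  have hc : ∀ n : ℕ, ∃ t : ℝ × ℝ, t ∈ T ∧ t ≠ 0 ∧ ‖t‖ < 1 / (n + 1) := by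
    intro n
    obtain ⟨t, ht, h0, hn⟩ := h (1 / (n + 1)) (by positivity)
    exact ⟨t, ht, h0, hn⟩
  choose t htT ht0 htn using hc
  have hnorm : ∀ n, ‖t n‖ ≠ 0 := fun n => norm_ne_zero_iff.mpr (ht0 n)
  set u : ℕ → ℝ × ℝ := fun n => ‖t n‖⁻¹ • t n with hu
  have hu1 : ∀ n, ‖u n‖ = 1 := by
    intro n
    rw [hu]
    simp [norm_smul, abs_of_nonneg (inv_nonneg.mpr (norm_nonneg _)),
      inv_mul_cancel₀ (hnorm n)]
  have hus : ∀ n, u n ∈ Metric.sphere (0 : ℝ × ℝ) 1 := by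
    intro n; rw [mem_sphere_zero_iff_norm]; exact hu1 n
  obtain ⟨u₀, hu₀s, φ, hφ, hφt⟩ :=
    (isCompact_sphere (0 : ℝ × ℝ) 1).tendsto_subseq hus
  refine ⟨u₀, mem_sphere_zero_iff_norm.mp hu₀s, fun r => ?_⟩
  set s : ℕ → ℝ := fun n => (⌊r / ‖t (φ n)‖⌋ : ℝ) * ‖t (φ n)‖ with hs
  have hbnd : ∀ n, ‖s n - r‖ ≤ ‖t (φ n)‖ := by
    intro n
    have hpos : (0 : ℝ) < ‖t (φ n)‖ := lt_of_le_of_ne (norm_nonneg _) (Ne.symm (hnorm _))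
    rw [hs]
    have h1 : (⌊r / ‖t (φ n)‖⌋ : ℝ) * ‖t (φ n)‖ - r
        = ((⌊r / ‖t (φ n)‖⌋ : ℝ) - r / ‖t (φ n)‖) * ‖t (φ n)‖ := by
      field_simp
    rw [Real.norm_eq_abs, h1, abs_mul, abs_of_pos hpos]
    have h2 : |(⌊r / ‖t (φ n)‖⌋ : ℝ) - r / ‖t (φ n)‖| ≤ 1 := by
      rw [abs_sub_comm, abs_of_nonneg (sub_nonneg.mpr (Int.floor_le _))]
      linarith [Int.lt_floor_add_one (r / ‖t (φ n)‖)]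
    nlinarith
  have htzero : Filter.Tendsto (fun n => ‖t (φ n)‖) atTop (nhds 0) := by
    apply squeeze_zero (fun n => norm_nonneg _) (fun n => le_of_lt (htn (φ n)))
    have : Filter.Tendsto (fun n : ℕ => 1 / ((n : ℝ) + 1)) atTop (nhds 0) :=
      tendsto_one_div_add_atTop_nhds_zero_nat
    apply squeeze_zero (fun n => by positivity) (fun n => ?_) this
    have hnφ : (n : ℝ) ≤ φ n := by exact_mod_cast (hφ.le_apply : n ≤ φ n)
    gcongr
  have hst : Filter.Tendsto s atTop (nhds r) := by
    rw [tendsto_iff_norm_sub_tendsto_zero]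
    exact squeeze_zero (fun n => norm_nonneg _) hbnd htzero
  have hz : Filter.Tendsto (fun n => s n • u (φ n)) atTop (nhds (r • u₀)) :=
    hst.smul hφt
  have hmem : ∀ n, s n • u (φ n) ∈ (T : Set (ℝ × ℝ)) := by
    intro n
    have : s n • u (φ n) = ⌊r / ‖t (φ n)‖⌋ • t (φ n) := by
      rw [hs, hu]
      rw [← Int.cast_smul_eq_zsmul ℝ]
      rw [smul_smul, mul_assoc, mul_inv_cancel₀ (hnorm _), mul_one]
    rw [this]
    exact AddSubgroup.zsmul_mem T (htT _) _
  exact mem_closure_of_tendsto hz (Filter.Eventually.of_forall hmem)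

end Helpers

set_option maxHeartbeats 2000000 in
/-- Lemma 4.7: a finitely generated subgroup `T ⊆ ℝ²` of rank at least three,
all of whose corank-one subgroups span `ℝ²` over `ℝ`, is dense in `ℝ²`. -/
theorem stmt_0 (T : AddSubgroup (ℝ × ℝ)) (hfg : T.FG)
    (hrk : 3 ≤ Module.finrank ℤ T)
    (hspan : ∀ T' : AddSubgroup (ℝ × ℝ), T' ≤ T →
      Module.finrank ℤ T' = Module.finrank ℤ T - 1 →
      Submodule.span ℝ (T' : Set (ℝ × ℝ)) = ⊤) :
    Dense (T : Set (ℝ × ℝ)) := by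
  classical
  by_contra hnd
  set M : Submodule ℤ (ℝ × ℝ) := T.toIntSubmodule with hMdef
  have hMT : M.toAddSubgroup = T := AddSubgroup.toIntSubmodule_toAddSubgroup T
  have hTM : ∀ x : ℝ × ℝ, x ∈ M ↔ x ∈ T := fun _ => Iff.rfl
  have hmm : ∀ (N : Submodule ℤ (ℝ × ℝ)) (x : ℝ × ℝ), x ∈ N.toAddSubgroup ↔ x ∈ N :=
    fun _ _ => Iff.rfl
  have hMfg : M.FG := by
    rw [Submodule.fg_iff_addSubgroup_fg, hMT]; exact hfg
  have hMfin : Module.Finite ℤ M := Module.Finite.iff_fg.mpr hMfg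
  have hrkM : 3 ≤ Module.finrank ℤ M := by rwa [finrank_addSubgroup] at hrk
  -- T is not discrete
  have hND : ∀ ε : ℝ, 0 < ε → ∃ t ∈ T, t ≠ 0 ∧ ‖t‖ < ε := by
    by_contra hd
    push_neg at hd
    obtain ⟨ε, hε, hsep⟩ := hd
    have : DiscreteTopology M := by
      rw [discreteTopology_iff_isOpen_singleton_zero]
      have : ({0} : Set M) = (Subtype.val) ⁻¹' (Metric.ball (0 : ℝ × ℝ) ε) := by
        ext ⟨x, hx⟩
        simp only [Set.mem_singleton_iff, Set.mem_preimage, Metric.mem_ball,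
          dist_zero_right]
        constructor
        · intro h
          have hx0 : x = 0 := by simpa [Subtype.ext_iff] using h
          simpa [hx0] using hε
        · intro hlt
          by_contra hne
          have hxT : x ∈ T := hx
          have hx0 : x ≠ 0 := fun h => hne (Subtype.ext h)
          exact absurd hlt (not_lt.mpr (hsep x hxT hx0))
      rw [this]
      exact (Metric.isOpen_ball).preimage continuous_subtype_val
    have := discrete_rank_le M
    omega
  obtain ⟨u, hu1, hline⟩ := line_in_closure T hND
  have hu0 : u ≠ 0 := by intro h; rw [h] at hu1; simp at hu1
  -- the linear functional
  set f : (ℝ × ℝ) →ₗ[ℝ] ℝ :=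
    u.2 • LinearMap.fst ℝ ℝ ℝ - u.1 • LinearMap.snd ℝ ℝ ℝ with hfdef
  have hfx : ∀ x : ℝ × ℝ, f x = u.2 * x.1 - u.1 * x.2 := fun x => rfl
  set v₀ : ℝ × ℝ := (u.2, -u.1) with hv₀
  have hfv₀ : f v₀ ≠ 0 := by
    rw [hfx]
    simp only [hv₀, mul_neg]
    intro h
    have h1 : u.2 * u.2 + u.1 * u.1 = 0 := by linarith [h]
    obtain ⟨h2, h3⟩ :=
      (add_eq_zero_iff_of_nonneg (mul_self_nonneg u.2) (mul_self_nonneg u.1)).mp h1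
    exact hu0 (Prod.ext (mul_self_eq_zero.mp h3) (mul_self_eq_zero.mp h2))
  -- kernel of f lies in the closure of T
  have hker : ∀ x : ℝ × ℝ, f x = 0 → x ∈ closure (T : Set (ℝ × ℝ)) := by
    intro x hx
    rw [hfx] at hx
    rcases eq_or_ne u.1 0 with h1 | h1
    · have h2 : u.2 ≠ 0 := by
        intro h2; exact hu0 (Prod.ext h1 h2)
      have hx1 : x.1 = 0 := by
        rw [h1] at hx
        have h3 : u.2 * x.1 = 0 := by linarith
        exact (mul_eq_zero.mp h3).resolve_left h2
      have : x = (x.2 / u.2) • u := by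
        apply Prod.ext <;> simp [hx1, h1, div_mul_cancel₀, h2]
      rw [this]; exact hline _
    · have : x = (x.1 / u.1) • u := by
        apply Prod.ext
        · simp [div_mul_cancel₀, h1]
        · simp only [Prod.smul_snd, smul_eq_mul]
          field_simp
          nlinarith [hx]
      rw [this]; exact hline _
  -- image subgroup under f
  set fT : AddSubgroup ℝ := T.map f.toAddMonoidHom with hfT
  have hmemfT : ∀ x ∈ T, f x ∈ fT := by
    intro x hx
    exact AddSubgroup.mem_map_of_mem _ hx
  rcases AddSubgroup.dense_or_cyclic fT with hdense | ⟨a, ha⟩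
  · -- f(T) dense in ℝ : then T is dense, contradiction
    set F : (ℝ × ℝ) →L[ℝ] ℝ := LinearMap.toContinuousLinearMap f with hF
    have hFc : ∀ x, F x = f x := fun x => rfl
    have hFsurj : Function.Surjective F := by
      intro y
      refine ⟨(y / f v₀) • v₀, ?_⟩
      show f ((y / f v₀) • v₀) = y
      rw [map_smul, smul_eq_mul, div_mul_cancel₀ _ hfv₀]
    set H := T.topologicalClosure with hH
    have hclH : (H : Set (ℝ × ℝ)) = closure (T : Set (ℝ × ℝ)) :=
      AddSubgroup.topologicalClosure_coe
    have hTH : (T : Set (ℝ × ℝ)) ⊆ (H : Set (ℝ × ℝ)) := by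
      rw [hclH]; exact subset_closure
    have hkerH : ∀ x : ℝ × ℝ, f x = 0 → x ∈ H := by
      intro x hx
      have : x ∈ (H : Set (ℝ × ℝ)) := by rw [hclH]; exact hker x hx
      exact this
    have hpre : F ⁻¹' (F '' (H : Set (ℝ × ℝ))) = (H : Set (ℝ × ℝ)) := by
      apply Set.Subset.antisymm
      · rintro x ⟨h, hh, hFh⟩
        have hsub : x - h ∈ H := by
          apply hkerH
          have : f x = f h := by rw [← hFc, ← hFc, hFh]
          rw [map_sub, this, sub_self]
        have := H.add_mem hsub hh
        simpa using this
      · exact Set.subset_preimage_image _ _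
    have hcl : IsClosed (F '' (H : Set (ℝ × ℝ))) := by
      refine ((F.isOpenMap hFsurj).isQuotientMap F.continuous hFsurj).isClosed_preimage.mp ?_
      rw [hpre]
      exact AddSubgroup.isClosed_topologicalClosure T
    have hsub : (fT : Set ℝ) ⊆ F '' (H : Set (ℝ × ℝ)) := by
      intro y hy
      obtain ⟨x, hx, rfl⟩ := AddSubgroup.mem_map.mp hy
      exact ⟨x, hTH hx, rfl⟩
    have hdense2 : Dense (F '' (H : Set (ℝ × ℝ))) := hdense.mono hsub
    have huniv : F '' (H : Set (ℝ × ℝ)) = Set.univ := by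
      rw [← hdense2.closure_eq, hcl.closure_eq]
    apply hnd
    rw [dense_iff_closure_eq, ← hclH, ← hpre, huniv]
    simp
  · -- f(T) cyclic, generated by a
    set g := f.restrictScalars ℤ with hgdef
    have hgx : ∀ x : ℝ × ℝ, g x = f x := fun x => rfl
    -- the general contradiction builder
    have contra : ∀ N' : Submodule ℤ (ℝ × ℝ), N' ≤ M → (∀ x ∈ N', f x = 0) →
        Module.finrank ℤ N' = Module.finrank ℤ M - 1 → False := by
      intro N' hle hkerN hrank
      have hTle : N'.toAddSubgroup ≤ T := by
        intro x hx
        exact (hTM x).mp (hle ((hmm N' x).mp hx))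
      have hr : Module.finrank ℤ N'.toAddSubgroup = Module.finrank ℤ T - 1 := by
        rw [finrank_toAddSubgroup, hrank, finrank_addSubgroup T]
      have htop := hspan _ hTle hr
      have hsub2 : span ℝ ((N'.toAddSubgroup : Set (ℝ × ℝ))) ≤ LinearMap.ker f := by
        rw [Submodule.span_le]
        intro x hx
        have hxN : x ∈ N' := (hmm N' x).mp hx
        exact LinearMap.mem_ker.mpr (hkerN x hxN)
      rw [htop] at hsub2
      exact hfv₀ (LinearMap.mem_ker.mp (hsub2 Submodule.mem_top))
    rcases eq_or_ne a 0 with ha0 | ha0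
    · -- a = 0 : T ⊆ ker f ; build a corank-one subgroup from a basis
      have hMker : ∀ x ∈ M, f x = 0 := by
        intro x hx
        have hxT : x ∈ T := (hTM x).mp hx
        have := hmemfT x hxT
        rw [ha, ha0, AddSubgroup.mem_closure_singleton] at this
        obtain ⟨n, hn⟩ := this
        rw [smul_zero] at hn
        exact hn.symm
      set ι := Module.Free.ChooseBasisIndex ℤ M with hι
      set b := Module.Free.chooseBasis ℤ M with hb
      have hcard : Fintype.card ι = Module.finrank ℤ M :=
        (Module.finrank_eq_card_chooseBasisIndex ℤ M).symm
      have hne : Nonempty ι := by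
        rw [← Fintype.card_pos_iff]; omega
      obtain ⟨i₀⟩ := hne
      set w : {i : ι // i ≠ i₀} → ℝ × ℝ := fun i => (b i.1 : ℝ × ℝ) with hw
      have hli : LinearIndependent ℤ w := by
        have h1 : LinearIndependent ℤ (fun i : ι => (b i : ℝ × ℝ)) :=
          b.linearIndependent.map' M.subtype (Submodule.ker_subtype M)
        exact h1.comp Subtype.val Subtype.val_injective
      set N' : Submodule ℤ (ℝ × ℝ) := span ℤ (Set.range w) with hN'
      have hle : N' ≤ M := by
        rw [hN', Submodule.span_le]
        rintro x ⟨i, rfl⟩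
        exact (b i.1).2
      have hrank : Module.finrank ℤ N' = Module.finrank ℤ M - 1 := by
        rw [hN', finrank_eq_card_basis (Basis.span hli)]
        simp [Fintype.card_subtype_compl, hcard]
      exact contra N' hle (fun x hx => hMker x (hle hx)) hrank
    · -- a ≠ 0 : T ∩ ker f has corank one
      set φ := g.comp M.subtype with hφdef
      have hrange : LinearMap.range φ = span ℤ ({a} : Set ℝ) := by
        ext x
        rw [LinearMap.mem_range, Submodule.mem_span_singleton]
        constructor
        · rintro ⟨⟨m, hm⟩, rfl⟩
          have hmT : m ∈ T := (hTM m).mp hm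
          have := hmemfT m hmT
          rw [ha, AddSubgroup.mem_closure_singleton] at this
          obtain ⟨n, hn⟩ := this
          exact ⟨n, hn⟩
        · rintro ⟨n, rfl⟩
          have haT : a ∈ fT := by rw [ha]; exact AddSubgroup.mem_closure_singleton_self a
          obtain ⟨m, hmT, hma⟩ := AddSubgroup.mem_map.mp haT
          have hmM : m ∈ M := (hTM m).mpr hmT
          refine ⟨n • ⟨m, hmM⟩, ?_⟩
          have hφm : φ ⟨m, hmM⟩ = a := hma
          calc φ (n • ⟨m, hmM⟩) = n • φ ⟨m, hmM⟩ := map_smul φ n _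
          _ = n • a := by rw [hφm]
      have hker2 : LinearMap.ker φ = Submodule.comap M.subtype (LinearMap.ker g) :=
        LinearMap.ker_comp _ _
      have hNoeth : IsNoetherian ℤ M := isNoetherian_of_isNoetherianRing_of_finite ℤ M
      have hfinker : Module.Finite ℤ (LinearMap.ker φ) :=
        Module.Finite.iff_fg.mpr (IsNoetherian.noetherian _)
      have hfinrange : Module.Finite ℤ (LinearMap.range φ) := inferInstance
      have hfr : Module.finrank ℤ (LinearMap.range φ) + Module.finrank ℤ (LinearMap.ker φ)
          = Module.finrank ℤ M := by
        have h1 : Module.rank ℤ (LinearMap.range φ) < Cardinal.aleph0 := rank_lt_aleph0 ℤ _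
        have h2 : Module.rank ℤ (LinearMap.ker φ) < Cardinal.aleph0 := rank_lt_aleph0 ℤ _
        rw [Module.finrank, Module.finrank, Module.finrank, ← Cardinal.toNat_add h1 h2,
          LinearMap.rank_range_add_rank_ker φ]
      have hr1 : Module.finrank ℤ (LinearMap.range φ) = 1 := by
        rw [hrange, ← (LinearEquiv.toSpanNonzeroSingleton ℤ ℝ a ha0).finrank_eq]
        exact Module.finrank_self ℤ
      set N' : Submodule ℤ (ℝ × ℝ) := M ⊓ LinearMap.ker g with hN'
      have hcomap : Submodule.comap M.subtype N' = LinearMap.ker φ := by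
        rw [hN', Submodule.comap_inf, hker2]
        simp [Submodule.comap_subtype_self]
      have he : Module.finrank ℤ N' = Module.finrank ℤ (LinearMap.ker φ) := by
        rw [← hcomap]
        exact (Submodule.comapSubtypeEquivOfLe (inf_le_left : N' ≤ M)).finrank_eq.symm
      refine contra N' inf_le_left (fun x hx => hx.2) ?_
      omega
end

section
/- Let $W$ be a Hodge structure of K3 type that is M-special, and let $l \in W_{\mathbb{Z}} \cap (W^{2,0}\oplus W^{0,2})_{\mathbb{R}}$ be nonzero, with $\sigma \in W^{2,0}$ the unique element with $\mathrm{Re}\,\sigma = l$. Then there exists a real constant $\lambda$ such that $\mathrm{Re}(q(\sigma, v)) \in \mathbb{Z}$ for all $v \in W_{\mathbb{Z}}$; consequently the image of $W_{\mathbb{Z}}$ under $v \mapsto q(\sigma, v)$ is contained in $\{z \in \mathbb{C} : \mathrm{Re}(z) \in \mathbb{Z}\}$ and is not dense in $\mathbb{C}$. -/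
/-- Direction (1) ⟹ (2) of Theorem 4.6: if `W` is M-special with integral
witness `l = Re σ`, `σ ∈ W^{2,0}`, and `q` is integral on the lattice, then
`Re (q(σ,v)) ∈ ℤ` for all lattice vectors `v`; consequently the image of the
lattice under `v ↦ q(σ,v)` lies in `{z : Re z ∈ ℤ}` and is not dense in `ℂ`. -/
theorem stmt_7 {W : Type*} [AddCommGroup W] [Module ℂ W] [FiniteDimensional ℂ W]
    -- real structure (complex conjugation)
    (c : W →ₗ[ℝ] W)
    (hc2 : ∀ v, c (c v) = v)
    (hcanti : ∀ (z : ℂ) (v : W), c (z • v) = (starRingEnd ℂ) z • c v)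
    -- Hodge decomposition of K3 type
    (W20 W11 W02 : Submodule ℂ W)
    (hdec : W20 ⊔ W11 ⊔ W02 = ⊤)
    (hd1 : (W20 ⊔ W02) ⊓ W11 = ⊥) (hd2 : W20 ⊓ W02 = ⊥)
    (h20 : Module.finrank ℂ W20 = 1) (h02 : Module.finrank ℂ W02 = 1)
    (hc20 : ∀ v ∈ W20, c v ∈ W02) (hc02 : ∀ v ∈ W02, c v ∈ W20)
    (hc11 : ∀ v ∈ W11, c v ∈ W11)
    -- the integral lattice: full rank, contained in the real points
    (WZ : AddSubgroup W) (hfg : WZ.FG)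
    (hfix : ∀ v ∈ WZ, c v = v)
    (hrank : Module.finrank ℤ WZ = Module.finrank ℂ W)
    (hspanZ : Submodule.span ℂ (WZ : Set W) = ⊤)
    -- the polarization, integral on the lattice
    (q : LinearMap.BilinForm ℂ W) (hsymm : ∀ v w, q v w = q w v)
    (hint : ∀ v ∈ WZ, ∀ w ∈ WZ, ∃ n : ℤ, q v w = (n : ℂ))
    (horth : ∀ v ∈ W11, ∀ w ∈ W20 ⊔ W02, q v w = 0)
    (hpos : ∀ v ∈ W20 ⊔ W02, c v = v → v ≠ 0 → ∃ r : ℝ, 0 < r ∧ q v v = (r : ℂ))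
    -- the M-special witness l and σ ∈ W^{2,0} with Re σ = l
    (l : W) (hlZ : l ∈ WZ) (hl0 : l ≠ 0) (hl : l ∈ W20 ⊔ W02)
    (σ : W) (hσ : σ ∈ W20) (hRe : σ + c σ = (2 : ℝ) • l) :
    (∀ v ∈ WZ, ∃ n : ℤ, (q σ v).re = (n : ℝ)) ∧
    ((fun v => q σ v) '' (WZ : Set W) ⊆ {z : ℂ | ∃ n : ℤ, z.re = (n : ℝ)}) ∧
    ¬ Dense ((fun v => q σ v) '' (WZ : Set W)) := by
  have key : ∀ v ∈ WZ, ∃ n : ℤ, (q σ v).re = (n : ℝ) := by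
    intro v hv
    obtain ⟨n, hn⟩ := hint l hlZ v hv
    refine ⟨n, ?_⟩
    have hconj : q (c σ) v = (starRingEnd ℂ) (q σ v) := by
      let f : W →ₗ[ℂ] ℂ :=
        { toFun := fun x => (starRingEnd ℂ) (q (c x) v)
          map_add' := fun x y => by simp [map_add]
          map_smul' := fun z x => by
            simp [hcanti, map_smul] }
      have hf : f = q.flip v := by
        apply LinearMap.ext_on hspanZ
        intro x hx
        obtain ⟨m, hm⟩ := hint x hx v hv
        simp only [f, LinearMap.coe_mk, AddHom.coe_mk, LinearMap.flip_apply,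
          hfix x hx, hm]
        simp [hm]
      have h2 := congrArg (fun g : W →ₗ[ℂ] ℂ => g σ) hf
      simp only [f, LinearMap.coe_mk, AddHom.coe_mk, LinearMap.flip_apply] at h2
      have := congrArg (starRingEnd ℂ) h2
      simpa using this
    have hsum : q σ v + q (c σ) v = 2 * (n : ℂ) := by
      have h3 := congrArg (fun w => q w v) hRe
      simp only [map_add, LinearMap.add_apply] at h3
      have h4 : ((2 : ℝ) • l : W) = (2 : ℂ) • l := by
        rw [← Complex.coe_smul]; norm_num
      rw [h4] at h3
      rw [h3, map_smul, LinearMap.smul_apply, hn]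
      ring_nf
    rw [hconj] at hsum
    have h5 : (q σ v).re + (q σ v).re = 2 * (n : ℝ) := by
      have := congrArg Complex.re hsum
      simpa [Complex.add_re, Complex.conj_re] using this
    linarith
  refine ⟨key, ?_, ?_⟩
  · rintro z ⟨v, hv, rfl⟩
    exact key v hv
  · intro hd
    have h12 : (1/2 : ℂ) ∈ closure ((fun v => q σ v) '' (WZ : Set W)) := hd _
    rw [Metric.mem_closure_iff] at h12
    obtain ⟨y, hy, hdist⟩ := h12 (1/4) (by norm_num)
    obtain ⟨v, hv, rfl⟩ := hy
    obtain ⟨n, hn⟩ := key v hv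
    have hre : |(1/2 : ℝ) - (n : ℝ)| ≥ 1/2 := by
      rcases le_or_gt n 0 with h | h
      · have hn0 : (n : ℝ) ≤ 0 := by exact_mod_cast h
        rw [abs_of_nonneg (by linarith)]
        linarith
      · have h1 : (1 : ℝ) ≤ (n : ℝ) := by exact_mod_cast h
        rw [abs_of_nonpos (by linarith)]
        linarith
    have hle : |(1/2 : ℝ) - (n : ℝ)| ≤ dist (1/2 : ℂ) (q σ v) := by
      have := Complex.abs_re_le_norm ((1/2 : ℂ) - q σ v)
      rw [Complex.dist_eq]
      calc |(1/2 : ℝ) - (n : ℝ)| = |((1/2 : ℂ) - q σ v).re| := by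
            simp [Complex.sub_re, hn]
        _ ≤ ‖(1/2 : ℂ) - q σ v‖ := this
    have : dist (1/2 : ℂ) (q σ v) ≥ 1/2 := le_trans hre hle
    linarith
end

section
/- Let $U \subset W$ be a Hodge substructure of a polarized Hodge structure $W$ of weight 2 such that $q|_U$ is nondegenerate and $U^{0,2} = W^{0,2}$. Then $W$ is M-special if and only if $U$ is M-special, and $W$ has maximal Picard rank if and only if $U$ does. -/
open Module Submodule TensorProduct

theorem auxB {W : Type*} [AddCommGroup W] [Module ℂ W] [FiniteDimensional ℂ W]
    [Module ℚ W] [IsScalarTower ℚ ℂ W]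
    (K : Submodule ℚ W) [FiniteDimensional ℚ K]
    (hKtop : Submodule.span ℂ (K : Set W) = ⊤)
    (hKle : finrank ℚ K ≤ finrank ℂ W)
    (S : Submodule ℚ W) (hS : S ≤ K) :
    finrank ℂ (Submodule.span ℂ (S : Set W)) = finrank ℚ S := by
  haveI : FiniteDimensional ℚ S := Submodule.finiteDimensional_of_le hS
  let φ : ℂ ⊗[ℚ] K →ₗ[ℂ] W := LinearMap.liftBaseChange ℂ K.subtype
  have hφr : LinearMap.range φ = ⊤ := by
    rw [eq_top_iff, ← hKtop]
    refine Submodule.span_le.mpr ?_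
    rintro x hx
    exact ⟨(1 : ℂ) ⊗ₜ ⟨x, hx⟩, by simp [φ]⟩
  have hdim : finrank ℂ (ℂ ⊗[ℚ] ↥K) = finrank ℚ K := Module.finrank_baseChange
  have h1 := LinearMap.finrank_range_add_finrank_ker φ
  rw [hφr, finrank_top] at h1
  have hker : LinearMap.ker φ = ⊥ := by
    rw [← Submodule.finrank_eq_zero (R := ℂ)]
    omega
  have hφinj : Function.Injective φ := LinearMap.ker_eq_bot.mp hker
  obtain ⟨π, hπ⟩ := (Submodule.inclusion hS).exists_leftInverse_of_injective
    (Submodule.ker_inclusion S K hS)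
  have hψinj : Function.Injective ((Submodule.inclusion hS).baseChange ℂ) := by
    have hcomp : (π.baseChange ℂ).comp ((Submodule.inclusion hS).baseChange ℂ)
        = LinearMap.id := by
      rw [← LinearMap.baseChange_comp, hπ, LinearMap.baseChange_id]
    intro x y hxy
    have := congrArg (π.baseChange ℂ) hxy
    simpa [← LinearMap.comp_apply, hcomp] using this
  have hinj2 : Function.Injective (φ ∘ₗ (Submodule.inclusion hS).baseChange ℂ) :=
    hφinj.comp hψinj
  let b := Module.finBasis ℚ S
  have hli : LinearIndependent ℂ
      ((φ ∘ₗ (Submodule.inclusion hS).baseChange ℂ) ∘ (b.baseChange ℂ)) :=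
    (b.baseChange ℂ).linearIndependent.map' _ (LinearMap.ker_eq_bot.mpr hinj2)
  have heq : ((φ ∘ₗ (Submodule.inclusion hS).baseChange ℂ) ∘ (b.baseChange ℂ))
      = fun i => ((b i : W)) := by
    funext i
    simp [φ, Basis.baseChange_apply, LinearMap.baseChange_tmul]
  rw [heq] at hli
  have hSspan : Submodule.span ℚ (Set.range fun i => ((b i : W))) = S := by
    have h2 := congrArg (Submodule.map S.subtype) b.span_eq
    rwa [Submodule.map_span, Submodule.map_subtype_top, ← Set.range_comp] at h2
  have h3 : Submodule.span ℂ (S : Set W)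
      = Submodule.span ℂ (Set.range fun i => ((b i : W))) := by
    conv_lhs => rw [← hSspan]
    exact Submodule.span_span_of_tower ℚ ℂ _
  rw [h3, finrank_span_eq_card hli]
  exact Fintype.card_fin _

/-- Lemma 4.8 (1): let `U ⊆ W` be a rational Hodge substructure of a polarized
weight-two Hodge structure with `q|_U` nondegenerate and `U^{0,2} = W^{0,2}`.
Then `W` is M-special iff `U` is, and `W` has maximal Picard rank iff `U`
does. -/
theorem stmt_10 {W : Type*} [AddCommGroup W] [Module ℂ W] [FiniteDimensional ℂ W]
    [Module ℚ W] [IsScalarTower ℚ ℂ W]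
    -- real structure (complex conjugation)
    (c : W →ₗ[ℝ] W)
    (hc2 : ∀ v, c (c v) = v)
    (hcanti : ∀ (z : ℂ) (v : W), c (z • v) = (starRingEnd ℂ) z • c v)
    -- weight-two Hodge decomposition
    (W20 W11 W02 : Submodule ℂ W)
    (hdec : W20 ⊔ W11 ⊔ W02 = ⊤)
    (hd1 : (W20 ⊔ W02) ⊓ W11 = ⊥) (hd2 : W20 ⊓ W02 = ⊥)
    (hc20 : ∀ v ∈ W20, c v ∈ W02) (hc02 : ∀ v ∈ W02, c v ∈ W20)
    (hc11 : ∀ v ∈ W11, c v ∈ W11)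
    -- the integral lattice: full rank, contained in the real points
    (WZ : AddSubgroup W) (hfg : WZ.FG)
    (hfix : ∀ v ∈ WZ, c v = v)
    (hrank : Module.finrank ℤ WZ = Module.finrank ℂ W)
    (hspanZ : Submodule.span ℂ (WZ : Set W) = ⊤)
    -- the polarization
    (q : LinearMap.BilinForm ℂ W) (hsymm : ∀ v w, q v w = q w v)
    (hrat : ∀ v ∈ WZ, ∀ w ∈ WZ, ∃ r : ℚ, q v w = (r : ℂ))
    (horth1 : ∀ v ∈ W11, ∀ w ∈ W20 ⊔ W02, q v w = 0)
    (horth2 : ∀ v ∈ W20, ∀ w ∈ W20, q v w = 0)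
    (horth3 : ∀ v ∈ W02, ∀ w ∈ W02, q v w = 0)
    -- U : rational Hodge substructure with q|_U nondegenerate, U^{0,2} = W^{0,2}
    (U : Submodule ℂ W)
    (hUrat : U = Submodule.span ℂ
      ((Submodule.span ℚ (WZ : Set W) : Set W) ∩ (U : Set W)))
    (hUdec : U = (W20 ⊓ U) ⊔ (W11 ⊓ U) ⊔ (W02 ⊓ U))
    (hUnd : ∀ v ∈ U, (∀ w ∈ U, q v w = 0) → v = 0)
    (hU02 : W02 ≤ U) :
    -- W is M-special iff U is M-special
    ((∃ v ∈ WZ, v ≠ 0 ∧ v ∈ W20 ⊔ W02) ↔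
      (∃ v ∈ WZ, v ∈ U ∧ v ≠ 0 ∧ v ∈ (W20 ⊓ U) ⊔ (W02 ⊓ U))) ∧
    -- W has maximal Picard rank iff U has maximal Picard rank
    ((W11 = Submodule.span ℂ
        ((Submodule.span ℚ (WZ : Set W) : Set W) ∩ (W11 : Set W))) ↔
      (W11 ⊓ U = Submodule.span ℂ
        ((Submodule.span ℚ (WZ : Set W) : Set W) ∩
          ((W11 ⊓ U : Submodule ℂ W) : Set W)))) := by
  classical
  -- basic scalar facts
  have hsmulQ : ∀ (a : ℚ) (v : W), a • v = ((a : ℂ)) • v := by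
    intro a v
    rw [← algebraMap_smul ℂ a v, eq_ratCast (algebraMap ℚ ℂ) a]
  have hcQ : ∀ (a : ℚ) (v : W), c (a • v) = a • c v := by
    intro a v
    rw [hsmulQ, hcanti, map_ratCast (starRingEnd ℂ) a, ← hsmulQ]
  -- c fixes the rational points
  have hKfix : ∀ v ∈ Submodule.span ℚ (WZ : Set W), c v = v := by
    intro v hv
    induction hv using Submodule.span_induction with
    | mem x hx => exact hfix x hx
    | zero => exact map_zero c
    | add x y hx hy ihx ihy => rw [map_add, ihx, ihy]
    | smul a x hx ih => rw [hcQ, ih]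
  -- c preserves U
  have hcU : ∀ u ∈ U, c u ∈ U := by
    intro u hu
    rw [hUrat] at hu
    induction hu using Submodule.span_induction with
    | mem x hx => rw [hKfix x hx.1]; exact hx.2
    | zero => rw [map_zero]; exact U.zero_mem
    | add x y hx hy ihx ihy => rw [map_add]; exact U.add_mem ihx ihy
    | smul z x hx ih => rw [hcanti]; exact U.smul_mem _ ih
  have hW20U : W20 ≤ U := by
    intro v hv
    have h1 : c v ∈ U := hU02 (hc20 v hv)
    have h2 := hcU _ h1
    rwa [hc2 v] at h2
  -- Part 1
  have h2002 : (W20 ⊓ U) ⊔ (W02 ⊓ U) = W20 ⊔ W02 := by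
    rw [inf_eq_left.mpr hW20U, inf_eq_left.mpr hU02]
  have hsupU : W20 ⊔ W02 ≤ U := sup_le hW20U hU02
  refine ⟨⟨?_, ?_⟩, ?_⟩
  · rintro ⟨v, hvZ, hv0, hvmem⟩
    exact ⟨v, hvZ, hsupU hvmem, hv0, by rw [h2002]; exact hvmem⟩
  · rintro ⟨v, hvZ, _, hv0, hvmem⟩
    rw [h2002] at hvmem
    exact ⟨v, hvZ, hv0, hvmem⟩
  -- Part 2
  -- finite dimensionality of the rational points
  obtain ⟨s, hs⟩ := hfg
  have hKs : Submodule.span ℚ (WZ : Set W) = Submodule.span ℚ (s : Set W) := by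
    apply le_antisymm
    · rw [Submodule.span_le]
      intro x hx
      have hx' : x ∈ AddSubgroup.closure (s : Set W) := by rw [hs]; exact hx
      exact (AddSubgroup.closure_le
        ((Submodule.span ℚ ((s : Set W))).toAddSubgroup)).mpr
        (fun y hy => Submodule.subset_span hy) hx'
    · exact Submodule.span_mono (by rw [← hs]; exact AddSubgroup.subset_closure)
  haveI hFDK : FiniteDimensional ℚ (Submodule.span ℚ (WZ : Set W)) := by
    rw [hKs]; exact FiniteDimensional.span_of_finite ℚ s.finite_toSet
  have hKtop : Submodule.span ℂ ((Submodule.span ℚ (WZ : Set W) : Submodule ℚ W) : Set W) = ⊤ := by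
    rw [Submodule.span_span_of_tower ℚ ℂ _, hspanZ]
  -- clearing denominators
  have hclear : ∀ v ∈ Submodule.span ℚ (WZ : Set W),
      ∃ m : ℕ, m ≠ 0 ∧ (m : ℚ) • v ∈ WZ := by
    intro v hv
    induction hv using Submodule.span_induction with
    | mem x hx => exact ⟨1, one_ne_zero, by simpa using hx⟩
    | zero => exact ⟨1, one_ne_zero, by simpa using WZ.zero_mem⟩
    | add x y hx hy ihx ihy =>
      obtain ⟨m1, hm1, h1⟩ := ihx
      obtain ⟨m2, hm2, h2⟩ := ihy
      refine ⟨m1 * m2, mul_ne_zero hm1 hm2, ?_⟩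
      have e1 : ((m1 * m2 : ℕ) : ℚ) • (x + y)
          = m2 • ((m1 : ℚ) • x) + m1 • ((m2 : ℚ) • y) := by
        rw [smul_add, ← Nat.cast_smul_eq_nsmul ℚ m2, ← Nat.cast_smul_eq_nsmul ℚ m1,
          smul_smul, smul_smul]
        push_cast
        rw [mul_comm (m2 : ℚ) (m1 : ℚ)]
      rw [e1]
      exact WZ.add_mem (AddSubgroup.nsmul_mem WZ h1 m2) (AddSubgroup.nsmul_mem WZ h2 m1)
    | smul a x hx ih =>
      obtain ⟨m, hm, hmx⟩ := ih
      refine ⟨a.den * m, mul_ne_zero a.den_nz hm, ?_⟩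
      have key : (a.den : ℚ) * a = (a.num : ℚ) := Rat.den_mul_eq_num a
      have e1 : ((a.den * m : ℕ) : ℚ) • (a • x) = a.num • ((m : ℚ) • x) := by
        rw [smul_smul, ← Int.cast_smul_eq_zsmul ℚ, smul_smul]
        congr 1
        push_cast
        calc (a.den : ℚ) * (m : ℚ) * a = ((a.den : ℚ) * a) * m := by ring
          _ = (a.num : ℚ) * m := by rw [key]
      rw [e1]
      exact AddSubgroup.zsmul_mem WZ hmx a.num
  -- rank of the rational points is at most finrank ℂ W
  have hKle : finrank ℚ (Submodule.span ℚ (WZ : Set W)) ≤ finrank ℂ W := by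
    rw [← hrank]
    let K0 : Submodule ℚ W := Submodule.span ℚ (WZ : Set W)
    let b : Basis (Fin (finrank ℚ K0)) ℚ K0 := Module.finBasis ℚ K0
    let g : Fin (finrank ℚ K0) → W := K0.subtype ∘ b
    have hb : LinearIndependent ℚ g :=
      b.linearIndependent.map' K0.subtype (Submodule.ker_subtype _)
    choose m hm0 hmem using fun i => hclear _ (b i).2
    let u : Fin (finrank ℚ K0) → ℚˣ := fun i => Units.mk0 ((m i : ℚ)) (by exact_mod_cast hm0 i)
    have hbu : LinearIndependent ℚ (u • g) := hb.units_smul u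
    have hbz : LinearIndependent ℤ (u • g) :=
      hbu.restrict_scalars (by
        intro x y hxy
        have h2 : ((x : ℚ)) = (y : ℚ) := by simpa using hxy
        exact_mod_cast h2)
    have hmem' : ∀ i, (u • g) i ∈ WZ := by
      intro i
      have h3 := hmem i
      simpa [u, g, Units.smul_def] using h3
    let f : ↥WZ →ₗ[ℤ] W := (AddSubgroup.subtype WZ).toIntLinearMap
    let w' : Fin (finrank ℚ K0) → ↥WZ := fun i => ⟨(u • g) i, hmem' i⟩
    have hw' : LinearIndependent ℤ w' := by
      apply LinearIndependent.of_comp f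
      exact hbz
    haveI hMF : Module.Finite ℤ ↥WZ :=
      Module.Finite.iff_addGroup_fg.mpr ((AddGroup.fg_iff_addSubgroup_fg WZ).mpr ⟨s, hs⟩)
    simpa using hw'.fintype_card_le_finrank
  -- the dimension formula for rational subspaces
  have hB : ∀ S : Submodule ℚ W, S ≤ Submodule.span ℚ (WZ : Set W) →
      finrank ℂ (Submodule.span ℂ (S : Set W)) = finrank ℚ S :=
    fun S hS => auxB _ hKtop hKle S hS
  have hdn : finrank ℚ (Submodule.span ℚ (WZ : Set W)) = finrank ℂ W := by
    have h1 := hB _ le_rfl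
    rw [hKtop, finrank_top] at h1
    omega
  -- rationality of q on rational points
  have hratK1 : ∀ v ∈ WZ, ∀ w ∈ Submodule.span ℚ (WZ : Set W), ∃ r : ℚ, q v w = (r : ℂ) := by
    intro v hv w hw
    induction hw using Submodule.span_induction with
    | mem x hx => exact hrat v hv x hx
    | zero => exact ⟨0, by simp⟩
    | add x y hx hy ihx ihy =>
      obtain ⟨r1, h1⟩ := ihx
      obtain ⟨r2, h2⟩ := ihy
      refine ⟨r1 + r2, ?_⟩
      rw [map_add, h1, h2]
      push_cast; ring
    | smul a x hx ih =>
      obtain ⟨r, h⟩ := ih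
      refine ⟨a * r, ?_⟩
      rw [hsmulQ, map_smul, h, smul_eq_mul]
      push_cast; ring
  have hratK : ∀ v ∈ Submodule.span ℚ (WZ : Set W), ∀ w ∈ Submodule.span ℚ (WZ : Set W),
      ∃ r : ℚ, q v w = (r : ℂ) := by
    intro v hv
    induction hv using Submodule.span_induction with
    | mem x hx => exact hratK1 x hx
    | zero => intro w hw; exact ⟨0, by simp⟩
    | add x y hx hy ihx ihy =>
      intro w hw
      obtain ⟨r1, h1⟩ := ihx w hw
      obtain ⟨r2, h2⟩ := ihy w hw
      refine ⟨r1 + r2, ?_⟩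
      rw [map_add, LinearMap.add_apply, h1, h2]
      push_cast; ring
    | smul a x hx ih =>
      intro w hw
      obtain ⟨r, h⟩ := ih w hw
      refine ⟨a * r, ?_⟩
      rw [hsmulQ, map_smul, LinearMap.smul_apply, h, smul_eq_mul]
      push_cast; ring
  -- the orthogonal complement of U
  have href : q.IsRefl := fun x y hxy => by rw [hsymm]; exact hxy
  have hndU : (q.restrict U).Nondegenerate := by
    refine ⟨?_, fun ⟨v, hv⟩ h => Subtype.ext
      (hUnd v hv (fun w hw => by rw [hsymm]; simpa using h ⟨w, hw⟩))⟩
    rintro ⟨v, hv⟩ h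
    have hv0 : v = 0 := hUnd v hv (fun w hw => by simpa using h ⟨w, hw⟩)
    exact Subtype.ext hv0
  have hcompl : IsCompl U (q.orthogonal U) :=
    q.isCompl_orthogonal_of_restrict_nondegenerate href hndU
  -- decomposition of arbitrary vectors
  have hdecW : ∀ w : W, ∃ a ∈ W20, ∃ n ∈ W11, ∃ bb ∈ W02, w = a + n + bb := by
    intro w
    have hw : w ∈ W20 ⊔ W11 ⊔ W02 := by rw [hdec]; trivial
    obtain ⟨y, hy, bb, hbb, hyb⟩ := Submodule.mem_sup.mp hw
    obtain ⟨a, ha, n, hn, han⟩ := Submodule.mem_sup.mp hy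
    exact ⟨a, ha, n, hn, bb, hbb, by rw [← hyb, ← han]⟩
  have hUdecmem : ∀ u ∈ U, ∃ u2 ∈ W20 ⊓ U, ∃ u1 ∈ W11 ⊓ U, ∃ u0 ∈ W02 ⊓ U,
      u = u2 + u1 + u0 := by
    intro u hu
    have hu' : u ∈ (W20 ⊓ U) ⊔ (W11 ⊓ U) ⊔ (W02 ⊓ U) := by rw [← hUdec]; exact hu
    obtain ⟨y, hy, u0, hu0, hyu⟩ := Submodule.mem_sup.mp hu'
    obtain ⟨u2, hu2, u1, hu1, h21⟩ := Submodule.mem_sup.mp hy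
    exact ⟨u2, hu2, u1, hu1, u0, hu0, by rw [← hyu, ← h21]⟩
  have hEle : q.orthogonal U ≤ W11 := by
    intro w hw
    have hw' : ∀ u ∈ U, q u w = 0 := fun u hu =>
      (LinearMap.BilinForm.mem_orthogonal_iff.mp hw) u hu
    obtain ⟨a, ha, n, hn, bb, hbb, rfl⟩ := hdecW w
    have qa : ∀ u ∈ U, q u a = 0 := by
      intro u hu
      obtain ⟨u2, hu2, u1, hu1, u0, hu0, rfl⟩ := hUdecmem u hu
      have h0 : q u0 a = 0 := by
        have h00 : q u0 (a + n + bb) = 0 := hw' u0 (Submodule.mem_inf.mp hu0).2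
        have h01 : q u0 n = 0 := by
          rw [hsymm]
          exact horth1 n hn u0 (Submodule.mem_sup_right (Submodule.mem_inf.mp hu0).1)
        have h02 : q u0 bb = 0 := horth3 u0 (Submodule.mem_inf.mp hu0).1 bb hbb
        rw [map_add, map_add, h01, h02] at h00
        simpa using h00
      have h2 : q u2 a = 0 := horth2 u2 (Submodule.mem_inf.mp hu2).1 a ha
      have h1 : q u1 a = 0 :=
        horth1 u1 (Submodule.mem_inf.mp hu1).1 a (Submodule.mem_sup_left ha)
      simp [map_add, LinearMap.add_apply, h0, h1, h2]
    have ha0 : a = 0 := hUnd a (hW20U ha) (fun x hx => by rw [hsymm]; exact qa x hx)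
    have qb : ∀ u ∈ U, q u bb = 0 := by
      intro u hu
      obtain ⟨u2, hu2, u1, hu1, u0, hu0, rfl⟩ := hUdecmem u hu
      have h2 : q u2 bb = 0 := by
        have h00 : q u2 (a + n + bb) = 0 := hw' u2 (Submodule.mem_inf.mp hu2).2
        have h01 : q u2 n = 0 := by
          rw [hsymm]
          exact horth1 n hn u2 (Submodule.mem_sup_left (Submodule.mem_inf.mp hu2).1)
        have h02 : q u2 a = 0 := horth2 u2 (Submodule.mem_inf.mp hu2).1 a ha
        rw [map_add, map_add, h01, h02] at h00
        simpa using h00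
      have h1 : q u1 bb = 0 :=
        horth1 u1 (Submodule.mem_inf.mp hu1).1 bb (Submodule.mem_sup_right hbb)
      have h0 : q u0 bb = 0 := horth3 u0 (Submodule.mem_inf.mp hu0).1 bb hbb
      simp [map_add, LinearMap.add_apply, h0, h1, h2]
    have hb0 : bb = 0 := hUnd bb (hU02 hbb) (fun x hx => by rw [hsymm]; exact qb x hx)
    rw [ha0, hb0, zero_add, add_zero]
    exact hn
  have hW11split : W11 = (W11 ⊓ U) ⊔ q.orthogonal U := by
    refine le_antisymm ?_ (sup_le inf_le_left hEle)
    intro w hw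
    have hwT : w ∈ U ⊔ q.orthogonal U := by rw [hcompl.sup_eq_top]; trivial
    obtain ⟨u, hu, e, he, rfl⟩ := Submodule.mem_sup.mp hwT
    have heW : e ∈ W11 := hEle he
    have huW : u ∈ W11 := by
      have h4 : u = (u + e) - e := by abel
      rw [h4]; exact Submodule.sub_mem _ hw heW
    exact Submodule.add_mem _
      (Submodule.mem_sup_left (Submodule.mem_inf.mpr ⟨huW, hu⟩))
      (Submodule.mem_sup_right he)
  -- rationality machinery
  have hRatle : ∀ S : Submodule ℂ W,
      Submodule.span ℂ ((Submodule.span ℚ (WZ : Set W) : Set W) ∩ (S : Set W)) ≤ S :=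
    fun S => Submodule.span_le.mpr Set.inter_subset_right
  have hSQcoe : ∀ S : Submodule ℂ W,
      ((Submodule.span ℚ (WZ : Set W) : Set W) ∩ (S : Set W))
        = ((Submodule.span ℚ (WZ : Set W) ⊓ S.restrictScalars ℚ : Submodule ℚ W) : Set W) := by
    intro S
    ext x
    simp
  have hBq : ∀ S : Submodule ℂ W,
      finrank ℂ (Submodule.span ℂ ((Submodule.span ℚ (WZ : Set W) : Set W) ∩ (S : Set W)))
        = finrank ℚ (Submodule.span ℚ (WZ : Set W) ⊓ S.restrictScalars ℚ : Submodule ℚ W) := by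
    intro S
    rw [hSQcoe]
    exact hB _ inf_le_left
  have hFDsub : ∀ T : Submodule ℚ W, T ≤ Submodule.span ℚ (WZ : Set W) →
      FiniteDimensional ℚ T :=
    fun T hT => Submodule.finiteDimensional_of_le hT
  have ratSup : ∀ S T : Submodule ℂ W,
      S = Submodule.span ℂ ((Submodule.span ℚ (WZ : Set W) : Set W) ∩ (S : Set W)) →
      T = Submodule.span ℂ ((Submodule.span ℚ (WZ : Set W) : Set W) ∩ (T : Set W)) →
      S ⊔ T = Submodule.span ℂ
        ((Submodule.span ℚ (WZ : Set W) : Set W) ∩ ((S ⊔ T : Submodule ℂ W) : Set W)) := by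
    intro S T hS hT
    refine le_antisymm (sup_le ?_ ?_) (hRatle _)
    · exact hS.le.trans (Submodule.span_mono
        (Set.inter_subset_inter_right _ (SetLike.coe_subset_coe.mpr le_sup_left)))
    · exact hT.le.trans (Submodule.span_mono
        (Set.inter_subset_inter_right _ (SetLike.coe_subset_coe.mpr le_sup_right)))
  have ratInf : ∀ S T : Submodule ℂ W,
      S = Submodule.span ℂ ((Submodule.span ℚ (WZ : Set W) : Set W) ∩ (S : Set W)) →
      T = Submodule.span ℂ ((Submodule.span ℚ (WZ : Set W) : Set W) ∩ (T : Set W)) →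
      S ⊓ T = Submodule.span ℂ
        ((Submodule.span ℚ (WZ : Set W) : Set W) ∩ ((S ⊓ T : Submodule ℂ W) : Set W)) := by
    intro S T hS hT
    haveI := hFDsub (Submodule.span ℚ (WZ : Set W) ⊓ S.restrictScalars ℚ) inf_le_left
    haveI := hFDsub (Submodule.span ℚ (WZ : Set W) ⊓ T.restrictScalars ℚ) inf_le_left
    haveI := hFDsub (Submodule.span ℚ (WZ : Set W) ⊓ (S ⊔ T).restrictScalars ℚ) inf_le_left
    haveI := hFDsub (Submodule.span ℚ (WZ : Set W) ⊓ (S ⊓ T).restrictScalars ℚ) inf_le_left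
    have hfS : finrank ℚ (Submodule.span ℚ (WZ : Set W) ⊓ S.restrictScalars ℚ : Submodule ℚ W)
        = finrank ℂ S := by rw [← hBq S, ← hS]
    have hfT : finrank ℚ (Submodule.span ℚ (WZ : Set W) ⊓ T.restrictScalars ℚ : Submodule ℚ W)
        = finrank ℂ T := by rw [← hBq T, ← hT]
    have hSQinf : (Submodule.span ℚ (WZ : Set W) ⊓ (S ⊓ T).restrictScalars ℚ : Submodule ℚ W)
        = (Submodule.span ℚ (WZ : Set W) ⊓ S.restrictScalars ℚ)
            ⊓ (Submodule.span ℚ (WZ : Set W) ⊓ T.restrictScalars ℚ) := by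
      ext x
      simp only [Submodule.mem_inf, Submodule.restrictScalars_mem]
      tauto
    have hrS : S.restrictScalars ℚ ≤ (S ⊔ T).restrictScalars ℚ :=
      fun x hx => (le_sup_left : S ≤ S ⊔ T) hx
    have hrT : T.restrictScalars ℚ ≤ (S ⊔ T).restrictScalars ℚ :=
      fun x hx => (le_sup_right : T ≤ S ⊔ T) hx
    have hsuple : (Submodule.span ℚ (WZ : Set W) ⊓ S.restrictScalars ℚ)
          ⊔ (Submodule.span ℚ (WZ : Set W) ⊓ T.restrictScalars ℚ)
        ≤ Submodule.span ℚ (WZ : Set W) ⊓ (S ⊔ T).restrictScalars ℚ :=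
      sup_le (inf_le_inf_left _ hrS) (inf_le_inf_left _ hrT)
    have h4 : finrank ℚ ((Submodule.span ℚ (WZ : Set W) ⊓ S.restrictScalars ℚ)
          ⊔ (Submodule.span ℚ (WZ : Set W) ⊓ T.restrictScalars ℚ) : Submodule ℚ W)
        ≤ finrank ℂ (S ⊔ T : Submodule ℂ W) := by
      calc finrank ℚ ((Submodule.span ℚ (WZ : Set W) ⊓ S.restrictScalars ℚ)
          ⊔ (Submodule.span ℚ (WZ : Set W) ⊓ T.restrictScalars ℚ) : Submodule ℚ W)
          ≤ finrank ℚ (Submodule.span ℚ (WZ : Set W) ⊓ (S ⊔ T).restrictScalars ℚ : Submodule ℚ W) :=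
            Submodule.finrank_mono hsuple
        _ = finrank ℂ (Submodule.span ℂ
            ((Submodule.span ℚ (WZ : Set W) : Set W) ∩ ((S ⊔ T : Submodule ℂ W) : Set W))) :=
            (hBq _).symm
        _ ≤ finrank ℂ (S ⊔ T : Submodule ℂ W) := Submodule.finrank_mono (hRatle _)
    have h5 := Submodule.finrank_sup_add_finrank_inf_eq
      (Submodule.span ℚ (WZ : Set W) ⊓ S.restrictScalars ℚ)
      (Submodule.span ℚ (WZ : Set W) ⊓ T.restrictScalars ℚ)
    have h6 := Submodule.finrank_sup_add_finrank_inf_eq S T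
    refine (Submodule.eq_of_le_of_finrank_le (hRatle _) ?_).symm
    rw [hBq _, hSQinf]
    omega
  -- the orthogonal complement has rational points of full rank
  -- the orthogonal complement has rational points of full rank
  haveI hFDU : FiniteDimensional ℚ
      (Submodule.span ℚ (WZ : Set W) ⊓ U.restrictScalars ℚ : Submodule ℚ W) :=
    hFDsub _ inf_le_left
  haveI hFDE : FiniteDimensional ℚ
      (Submodule.span ℚ (WZ : Set W) ⊓ (q.orthogonal U).restrictScalars ℚ : Submodule ℚ W) :=
    hFDsub _ inf_le_left
  have hfU : finrank ℚ (Submodule.span ℚ (WZ : Set W) ⊓ U.restrictScalars ℚ : Submodule ℚ W)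
      = finrank ℂ U := by rw [← hBq U, ← hUrat]
  set bU := Module.finBasis ℚ
    (Submodule.span ℚ (WZ : Set W) ⊓ U.restrictScalars ℚ : Submodule ℚ W) with hbUdef
  have hbUK : ∀ i, ((bU i : W)) ∈ Submodule.span ℚ (WZ : Set W) :=
    fun i => (Submodule.mem_inf.mp (bU i).2).1
  have hbUspan : Submodule.span ℚ (Set.range fun i => ((bU i : W)))
      = (Submodule.span ℚ (WZ : Set W) ⊓ U.restrictScalars ℚ : Submodule ℚ W) := by
    have h2 := congrArg
      (Submodule.map (Submodule.span ℚ (WZ : Set W) ⊓ U.restrictScalars ℚ).subtype) bU.span_eq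
    rwa [Submodule.map_span, Submodule.map_subtype_top, ← Set.range_comp] at h2
  have hUspan : U = Submodule.span ℂ (Set.range fun i => ((bU i : W))) := by
    have h3 : Submodule.span ℂ
        ((Submodule.span ℚ (WZ : Set W) ⊓ U.restrictScalars ℚ : Submodule ℚ W) : Set W)
        = Submodule.span ℂ (Set.range fun i => ((bU i : W))) := by
      conv_lhs => rw [← hbUspan]
      exact Submodule.span_span_of_tower ℚ ℂ _
    refine hUrat.trans ?_
    rw [hSQcoe]
    exact h3
  have hEfinrank : finrank ℂ (q.orthogonal U) ≤ finrank ℚ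
      (Submodule.span ℚ (WZ : Set W) ⊓ (q.orthogonal U).restrictScalars ℚ : Submodule ℚ W) := by
    let g : ↥(Submodule.span ℚ (WZ : Set W)) →ₗ[ℚ]
        (Fin (finrank ℚ (Submodule.span ℚ (WZ : Set W) ⊓ U.restrictScalars ℚ : Submodule ℚ W)) → ℂ) :=
      LinearMap.pi (fun i => ((q ((bU i : W))).restrictScalars ℚ)
        ∘ₗ (Submodule.span ℚ (WZ : Set W)).subtype)
    have hgker : ∀ k : ↥(Submodule.span ℚ (WZ : Set W)),
        g k = 0 → ((k : W) ∈ q.orthogonal U) := by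
      intro k hk
      rw [LinearMap.BilinForm.mem_orthogonal_iff]
      intro x hx
      have hx' : x ∈ Submodule.span ℂ (Set.range fun i => ((bU i : W))) := by
        rw [← hUspan]; exact hx
      have hker : Submodule.span ℂ (Set.range fun i => ((bU i : W)))
          ≤ LinearMap.ker (q.flip (k : W)) := by
        rw [Submodule.span_le]
        rintro y ⟨i, rfl⟩
        rw [SetLike.mem_coe, LinearMap.mem_ker]
        have h5 := congrFun (congrArg (fun h => (h : _ → ℂ)) hk) i
        have h5' : q ((bU i : W)) ((k : W)) = 0 := by simpa [g] using h5
        exact h5'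
      have h6 := hker hx'
      rw [LinearMap.mem_ker] at h6
      exact h6
    have hrange : finrank ℚ (LinearMap.range g) ≤
        finrank ℚ (Submodule.span ℚ (WZ : Set W) ⊓ U.restrictScalars ℚ : Submodule ℚ W) := by
      let emb : (Fin (finrank ℚ (Submodule.span ℚ (WZ : Set W)
            ⊓ U.restrictScalars ℚ : Submodule ℚ W)) → ℚ) →ₗ[ℚ]
          (Fin (finrank ℚ (Submodule.span ℚ (WZ : Set W)
            ⊓ U.restrictScalars ℚ : Submodule ℚ W)) → ℂ) :=
        LinearMap.pi (fun i => (Algebra.linearMap ℚ ℂ) ∘ₗ (LinearMap.proj i))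
      have hle : LinearMap.range g ≤ LinearMap.range emb := by
        rintro y ⟨k, rfl⟩
        choose r hr using fun i => hratK _ (hbUK i) (k : W) k.2
        refine ⟨fun i => r i, ?_⟩
        funext i
        simp only [emb, LinearMap.pi_apply, LinearMap.comp_apply, LinearMap.proj_apply,
          Algebra.linearMap_apply]
        rw [show ((algebraMap ℚ ℂ) (r i)) = ((r i : ℂ)) from eq_ratCast _ _, ← hr i]
        simp [g]
      haveI : FiniteDimensional ℚ (LinearMap.range emb) := inferInstance
      calc finrank ℚ (LinearMap.range g) ≤ finrank ℚ (LinearMap.range emb) :=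
            Submodule.finrank_mono hle
        _ ≤ finrank ℚ (Fin (finrank ℚ (Submodule.span ℚ (WZ : Set W)
              ⊓ U.restrictScalars ℚ : Submodule ℚ W)) → ℚ) := LinearMap.finrank_range_le emb
        _ = finrank ℚ (Submodule.span ℚ (WZ : Set W)
              ⊓ U.restrictScalars ℚ : Submodule ℚ W) := by
            simp [Module.finrank_pi]
    have hrn := LinearMap.finrank_range_add_finrank_ker g
    have hmaple : (LinearMap.ker g).map (Submodule.span ℚ (WZ : Set W)).subtype
        ≤ Submodule.span ℚ (WZ : Set W) ⊓ (q.orthogonal U).restrictScalars ℚ := by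
      rintro x ⟨k, hkmem, rfl⟩
      rw [Submodule.mem_inf]
      exact ⟨k.2, hgker k hkmem⟩
    have hfker : finrank ℚ ((LinearMap.ker g).map (Submodule.span ℚ (WZ : Set W)).subtype)
        = finrank ℚ (LinearMap.ker g) := Submodule.finrank_map_subtype_eq _ _
    have hmle := Submodule.finrank_mono hmaple
    have hcomplrank : finrank ℂ U + finrank ℂ (q.orthogonal U) = finrank ℂ W :=
      Submodule.finrank_add_eq_of_isCompl hcompl
    omega
  have ratE : q.orthogonal U = Submodule.span ℂ
      ((Submodule.span ℚ (WZ : Set W) : Set W) ∩ ((q.orthogonal U : Submodule ℂ W) : Set W)) := by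
    refine (Submodule.eq_of_le_of_finrank_le (hRatle _) ?_).symm
    rw [hBq _]
    exact hEfinrank
  constructor
  · intro h11
    exact ratInf W11 U h11 hUrat
  · intro hV
    rw [hW11split]
    exact ratSup _ _ hV ratE
end
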